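/- Let F be a field and suppose given two exact triangles of finite-dimensional F-vector spaces: a₁ : A → E₁, b₁ : E₁ → B, δ₁ : B → A, and a₂ : B → E₂, b₂ : E₂ → C, δ₂ : C → B. Assume dim E₁ = dim E₂ = 1, dim A = dim C = n, that the composite δ₁ ∘ δ₂ : C → A is zero, and that there exists a linear isomorphism φ : A → C for which the composite δ₂ ∘ φ ∘ δ₁ : B → B is zero. Then n ≤ 1 and dim B = 1 − n. (This is the common algebraic core of Lemmas 3.1 and 3.2 of the paper: the triangles are the rolled-up homology long exact sequences of the two short exact sequences of complexes appearing there, φ is induced by the U-translation, and the two vanishing composites come from D² = 0 on larger subquotient complexes.) -/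
import Mathlib


open Module

/-- The common algebraic core of Lemmas 3.1 and 3.2: given two exact triangles
`A → E₁ → B → A` and `B → E₂ → C → B` of finite-dimensional vector spaces with
`dim E₁ = dim E₂ = 1` and `dim A = dim C = n`, if `δ₁ ∘ δ₂ = 0` and there is an
isomorphism `φ : A ≃ C` with `δ₂ ∘ φ ∘ δ₁ = 0`, then `n ≤ 1` and `dim B = 1 - n`. -/
theorem two_triangles_core (F : Type) [Field F]
    (A E₁ B E₂ C : Type)
    [AddCommGroup A] [Module F A] [FiniteDimensional F A]
    [AddCommGroup E₁] [Module F E₁] [FiniteDimensional F E₁]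
    [AddCommGroup B] [Module F B] [FiniteDimensional F B]
    [AddCommGroup E₂] [Module F E₂] [FiniteDimensional F E₂]
    [AddCommGroup C] [Module F C] [FiniteDimensional F C]
    (a₁ : A →ₗ[F] E₁) (b₁ : E₁ →ₗ[F] B) (δ₁ : B →ₗ[F] A)
    (a₂ : B →ₗ[F] E₂) (b₂ : E₂ →ₗ[F] C) (δ₂ : C →ₗ[F] B)
    (h1a : LinearMap.range a₁ = LinearMap.ker b₁)
    (h1b : LinearMap.range b₁ = LinearMap.ker δ₁)
    (h1c : LinearMap.range δ₁ = LinearMap.ker a₁)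
    (h2a : LinearMap.range a₂ = LinearMap.ker b₂)
    (h2b : LinearMap.range b₂ = LinearMap.ker δ₂)
    (h2c : LinearMap.range δ₂ = LinearMap.ker a₂)
    (n : ℕ)
    (hE₁ : finrank F E₁ = 1) (hE₂ : finrank F E₂ = 1)
    (hA : finrank F A = n) (hC : finrank F C = n)
    (hδδ : δ₁ ∘ₗ δ₂ = 0)
    (hφ : ∃ φ : A ≃ₗ[F] C, δ₂ ∘ₗ (φ.toLinearMap ∘ₗ δ₁) = 0) :
    n ≤ 1 ∧ finrank F B = 1 - n := by
  obtain ⟨φ, hφ0⟩ := hφ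
  have rn1 := LinearMap.finrank_range_add_finrank_ker δ₁
  have rna1 := LinearMap.finrank_range_add_finrank_ker a₁
  have rnb1 := LinearMap.finrank_range_add_finrank_ker b₁
  have rna2 := LinearMap.finrank_range_add_finrank_ker a₂
  have rnb2 := LinearMap.finrank_range_add_finrank_ker b₂
  have rn2 := LinearMap.finrank_range_add_finrank_ker δ₂
  rw [← h1a, hE₁] at rnb1
  rw [← h1b] at rn1
  rw [← h1c, hA] at rna1
  rw [← h2a, hE₂] at rnb2
  rw [← h2b, hC] at rn2
  rw [← h2c] at rna2
  have hle1 : LinearMap.range δ₂ ≤ LinearMap.range b₁ := by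
    rw [h1b]; exact LinearMap.range_le_ker_iff.mpr hδδ
  have hd1 : finrank F (LinearMap.range δ₂) ≤ finrank F (LinearMap.range b₁) :=
    Submodule.finrank_mono hle1
  have hle2 : LinearMap.range (φ.toLinearMap ∘ₗ δ₁) ≤ LinearMap.range b₂ := by
    rw [h2b]; exact LinearMap.range_le_ker_iff.mpr hφ0
  have heq : finrank F (LinearMap.range (φ.toLinearMap ∘ₗ δ₁))
      = finrank F (LinearMap.range δ₁) := by
    rw [LinearMap.range_comp]
    exact LinearEquiv.finrank_map_eq φ _
  have hd2 : finrank F (LinearMap.range δ₁) ≤ finrank F (LinearMap.range b₂) := by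
    rw [← heq]; exact Submodule.finrank_mono hle2
  omega
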